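/- Let S be a closed set of pairs and let R, C ⊆ {1,…,n} be subsets with |R| = |C| ≥ 1. Then the minor det_R^C satisfies det_R^C(gu) = det_R^C(g) for all g ∈ SL_n(ℂ) and all u ∈ U_S if and only if S_j ⊆ C for every j ∈ C. -/
import Mathlib


open Matrix Filter Topology

noncomputable section

/-- A finite set `S` of pairs `(i,j)` of indices with `i < j` is *closed* if
`(i,j) ∈ S` and `(j,k) ∈ S` imply `(i,k) ∈ S`. -/
def PairsClosed {n : ℕ} (S : Finset (Fin n × Fin n)) : Prop :=
  (∀ p ∈ S, p.1 < p.2) ∧ ∀ i j k : Fin n, (i, j) ∈ S → (j, k) ∈ S → (i, k) ∈ S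

/-- The subgroup `U_S` of `SL_n(ℂ)`, as a set: matrices that are upper triangular,
with ones on the diagonal, and vanishing at each entry `(i,j)` with `i < j` and
`(i,j) ∉ S`. -/
def USet {n : ℕ} (S : Finset (Fin n × Fin n)) :
    Set (Matrix.SpecialLinearGroup (Fin n) ℂ) :=
  {u | (∀ i j : Fin n, j < i → u.val i j = 0) ∧ (∀ i : Fin n, u.val i i = 1) ∧
       ∀ i j : Fin n, i < j → (i, j) ∉ S → u.val i j = 0}

/-- `S_j = {j} ∪ {i : (i,j) ∈ S}`. -/
def colS {n : ℕ} (S : Finset (Fin n × Fin n)) (j : Fin n) : Finset (Fin n) :=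
  insert j ((S.filter (fun p => p.2 = j)).image Prod.fst)

/-- The minor `det_R^C` of a matrix: the determinant of the square submatrix with rows
indexed by `R` and columns indexed by `C` (both taken in increasing order). -/
def minorF {n : ℕ} (R C : Finset (Fin n)) (h : R.card = C.card)
    (g : Matrix (Fin n) (Fin n) ℂ) : ℂ :=
  Matrix.det (Matrix.of fun a b : Fin R.card =>
    g (R.orderIsoOfFin rfl a) (C.orderIsoOfFin h.symm b))

lemma mem_colS {n : ℕ} {S : Finset (Fin n × Fin n)} {j i : Fin n} :
    i ∈ colS S j ↔ i = j ∨ (i, j) ∈ S := by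
  simp only [colS, Finset.mem_insert, Finset.mem_image, Finset.mem_filter]
  constructor
  · rintro (h | ⟨p, ⟨hp, hp2⟩, rfl⟩)
    · exact Or.inl h
    · right; rwa [← hp2]
  · rintro (h | h)
    · exact Or.inl h
    · exact Or.inr ⟨(i, j), ⟨h, rfl⟩, rfl⟩

lemma perm_entry {n : ℕ} (σ : Equiv.Perm (Fin n)) (x y : Fin n) :
    σ.permMatrix ℂ x y = if σ x = y then 1 else 0 := by
  simp [Equiv.Perm.permMatrix, PEquiv.toMatrix_apply, Equiv.toPEquiv_apply, eq_comm]

/-- Let `S` be a closed set of pairs and `R, C ⊆ {1,…,n}` with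
`|R| = |C| ≥ 1`. Then the minor `det_R^C` satisfies `det_R^C(gu) = det_R^C(g)` for all
`g ∈ SL_n(ℂ)` and all `u ∈ U_S` if and only if `S_j ⊆ C` for every `j ∈ C`. -/
theorem stmt10 {n : ℕ} (hn : 1 ≤ n) (S : Finset (Fin n × Fin n)) (hS : PairsClosed S)
    (R C : Finset (Fin n)) (hRC : R.card = C.card) (hpos : 1 ≤ C.card) :
    (∀ g : Matrix.SpecialLinearGroup (Fin n) ℂ, ∀ u ∈ USet S,
        minorF R C hRC ((g * u).val) = minorF R C hRC g.val)
      ↔ (∀ j ∈ C, colS S j ⊆ C) := by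
  classical
  set f1 : Fin R.card → Fin n := fun a => R.orderIsoOfFin rfl a with hf1
  set f2 : Fin R.card → Fin n := fun b => C.orderIsoOfFin hRC.symm b with hf2
  have hf1mem : ∀ a, f1 a ∈ R := fun a => (R.orderIsoOfFin rfl a).2
  have hf2mem : ∀ b, f2 b ∈ C := fun b => (C.orderIsoOfFin hRC.symm b).2
  have hf2inj : Function.Injective f2 := fun a b h => by
    have := (C.orderIsoOfFin hRC.symm).injective (Subtype.ext h); exact this
  constructor
  · -- invariance → colS condition
    intro hinv j hj i hi
    by_contra hiC
    rcases mem_colS.mp hi with rfl | hijS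
    · exact hiC hj
    have hij : i < j := hS.1 _ hijS
    -- index of column j
    set b0 : Fin R.card := (C.orderIsoOfFin hRC.symm).symm ⟨j, hj⟩ with hb0
    have hf2b0 : f2 b0 = j := by
      simp only [hf2, hb0]
      rw [OrderIso.apply_symm_apply]
    -- the modified column function
    set c'' : Fin R.card → Fin n := fun a => if a = b0 then i else f2 a with hc''
    have hc''inj : Function.Injective c'' := by
      intro a b hab
      by_cases ha : a = b0 <;> by_cases hb : b = b0
      · rw [ha, hb]
      · exfalso; simp only [hc'', if_pos ha, if_neg hb] at hab
        exact hiC (hab ▸ hf2mem b)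
      · exfalso; simp only [hc'', if_neg ha, if_pos hb] at hab
        exact hiC (hab ▸ hf2mem a)
      · simp only [hc'', if_neg ha, if_neg hb] at hab
        exact hf2inj hab
    -- a row outside R
    have hRne : R ≠ Finset.univ := by
      intro h
      have : C = Finset.univ := Finset.eq_univ_of_card _ (by
        rw [← hRC, h, Finset.card_univ])
      exact hiC (this ▸ Finset.mem_univ i)
    obtain ⟨r, hr⟩ : ∃ r, r ∉ R := by
      by_contra h
      push_neg at h
      exact hRne (Finset.eq_univ_iff_forall.mpr h)
    -- build the permutation
    set e : {x // x ∈ R} ≃ {x // x ∈ Set.range c''} :=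
      ((R.orderIsoOfFin rfl).toEquiv.symm.trans
        (Equiv.ofInjective c'' hc''inj)).trans (Equiv.setCongr rfl) with he
    set σ : Equiv.Perm (Fin n) := e.extendSubtype with hσdef
    have hσ : ∀ a, σ (f1 a) = c'' a := by
      intro a
      rw [hσdef, Equiv.extendSubtype_apply_of_mem e (f1 a) (hf1mem a)]
      simp only [he, Equiv.trans_apply, Equiv.setCongr_apply]
      have h1 : (⟨f1 a, hf1mem a⟩ : {x // x ∈ R}) = R.orderIsoOfFin rfl a :=
        Subtype.ext rfl
      have h2 : (R.orderIsoOfFin rfl).toEquiv.symm ⟨f1 a, hf1mem a⟩ = a := by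
        rw [h1]; exact (R.orderIsoOfFin rfl).toEquiv.symm_apply_apply a
      rw [h2]
      rfl
    set ε : ℂ := ((Equiv.Perm.sign σ : ℤ) : ℂ) with hε
    set d : Fin n → ℂ := fun x => if x = r then ε else 1 with hd
    set gmat : Matrix (Fin n) (Fin n) ℂ := Matrix.diagonal d * σ.permMatrix ℂ with hgmat
    have hgentry : ∀ x y, gmat x y = (if x = r then ε else 1) * (if σ x = y then 1 else 0) := by
      intro x y
      rw [hgmat, Matrix.diagonal_mul, perm_entry]
    have hdet : gmat.det = 1 := by
      rw [hgmat, Matrix.det_mul, Matrix.det_diagonal, Matrix.det_permutation]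
      have hprod : (∏ x, d x) = ε := by simp [hd, Finset.prod_ite_eq']
      rw [hprod, hε]
      rcases Int.units_eq_one_or (Equiv.Perm.sign σ) with h | h <;> rw [h] <;> norm_num
    set g : Matrix.SpecialLinearGroup (Fin n) ℂ := ⟨gmat, hdet⟩ with hg
    set u : Matrix.SpecialLinearGroup (Fin n) ℂ :=
      ⟨Matrix.transvection i j (1 : ℂ), Matrix.det_transvection_of_ne i j hij.ne 1⟩ with hu
    have hUmem : u ∈ USet S := by
      refine ⟨?_, ?_, ?_⟩
      · intro a b hba
        simp only [hu, Matrix.transvection, Matrix.add_apply, Matrix.one_apply,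
          Matrix.single]
        rw [if_neg (by rintro rfl; exact lt_irrefl _ hba), Matrix.of_apply]
        rw [if_neg ?_]
        · ring
        · rintro ⟨rfl, rfl⟩; exact absurd hij (not_lt.mpr hba.le)
      · intro a
        simp only [hu, Matrix.transvection, Matrix.add_apply, Matrix.one_apply_eq,
          Matrix.single, Matrix.of_apply]
        rw [if_neg ?_]
        · ring
        · rintro ⟨rfl, rfl⟩; exact lt_irrefl _ hij
      · intro a b hab habS
        simp only [hu, Matrix.transvection, Matrix.add_apply, Matrix.one_apply,
          Matrix.single, Matrix.of_apply]
        rw [if_neg (by rintro rfl; exact lt_irrefl _ hab), if_neg ?_]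
        · ring
        · rintro ⟨rfl, rfl⟩; exact habS hijS
    have key := hinv g u hUmem
    -- compute minorF of g : the row b0 is zero
    have hM0 : minorF R C hRC g.val = 0 := by
      unfold minorF
      apply Matrix.det_eq_zero_of_row_eq_zero b0
      intro b
      simp only [Matrix.of_apply]
      show gmat (f1 b0) (f2 b) = 0
      rw [hgentry, if_neg (by rintro rfl; exact hr (hf1mem b0))]
      rw [if_neg ?_]
      · ring
      · rw [hσ]
        simp only [hc'', if_pos rfl]
        rintro rfl
        exact hiC (hf2mem b)
    -- compute minorF of g*u : it is the identity
    have hM1 : minorF R C hRC ((g * u).val) = 1 := by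
      unfold minorF
      have : (Matrix.of fun a b : Fin R.card =>
          (g * u).val (f1 a) (f2 b)) = (1 : Matrix (Fin R.card) (Fin R.card) ℂ) := by
        ext a b
        have hgu : (g * u).val = gmat * Matrix.transvection i j 1 := rfl
        simp only [Matrix.of_apply]
        rw [hgu]
        have hfr : ∀ a : Fin R.card, f1 a ≠ r := fun a h => hr (h ▸ hf1mem a)
        by_cases hb : b = b0
        · subst hb
          rw [hf2b0, Matrix.mul_transvection_apply_same, hgentry, hgentry,
              if_neg (hfr a), hσ]
          simp only [one_mul]
          by_cases ha : a = b0
          · subst ha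
            have e1 : c'' b0 = i := by simp [hc'']
            have e2 : c'' b0 ≠ j := by rw [e1]; exact hij.ne
            rw [if_neg e2, if_pos e1, Matrix.one_apply_eq]
            ring
          · have e1 : c'' a = f2 a := by simp [hc'', ha]
            have e2 : c'' a ≠ j := by
              rw [e1, ← hf2b0]; exact fun h => ha (hf2inj h)
            have e3 : c'' a ≠ i := by
              rw [e1]; exact fun h => hiC (h ▸ hf2mem a)
            rw [if_neg e2, if_neg e3, Matrix.one_apply_ne ha]
            ring
        · have hfb : f2 b ≠ j := by
            rw [← hf2b0]; exact fun h => hb (hf2inj h)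
          rw [Matrix.mul_transvection_apply_of_ne i j _ _ hfb, hgentry,
              if_neg (hfr a), hσ, one_mul]
          by_cases hab : a = b
          · subst hab
            have e1 : c'' a = f2 a := by simp [hc'', hb]
            rw [if_pos e1, Matrix.one_apply_eq]
          · by_cases ha : a = b0
            · subst ha
              have e1 : c'' b0 = i := by simp [hc'']
              rw [if_neg (by rw [e1]; exact fun h => hiC (h ▸ hf2mem b)),
                Matrix.one_apply_ne hab]
            · have e1 : c'' a = f2 a := by simp [hc'', ha]
              rw [if_neg (by rw [e1]; exact fun h => hab (hf2inj h)),
                Matrix.one_apply_ne hab]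
      rw [this, Matrix.det_one]
    rw [hM1, hM0] at key
    exact one_ne_zero key
  · -- colS condition → invariance
    intro hC g u hu
    obtain ⟨hu1, hu2, hu3⟩ := hu
    have hkey : ∀ (k : Fin n) (b : Fin R.card), k ∉ C → u.val k (f2 b) = 0 := by
      intro k b hk
      rcases lt_trichotomy k (f2 b) with h | h | h
      · by_cases hkS : (k, f2 b) ∈ S
        · exact absurd (hC (f2 b) (hf2mem b) (mem_colS.mpr (Or.inr hkS))) (by
            intro hsub; exact hk hsub)
        · exact hu3 k (f2 b) h hkS
      · exact absurd (h ▸ hf2mem b) hk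
      · exact hu1 k (f2 b) h
    have main : (Matrix.of fun a b : Fin R.card => (g * u).val (f1 a) (f2 b)) =
        (Matrix.of fun a b : Fin R.card => g.val (f1 a) (f2 b)) *
          (Matrix.of fun a b : Fin R.card => u.val (f2 a) (f2 b)) := by
      ext a b
      simp only [Matrix.of_apply, Matrix.mul_apply, Matrix.SpecialLinearGroup.coe_mul]
      have step1 : ∑ k : Fin n, g.val (f1 a) k * u.val k (f2 b) =
          ∑ k ∈ C, g.val (f1 a) k * u.val k (f2 b) := by
        symm
        apply Finset.sum_subset (Finset.subset_univ C)
        intro x _ hx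
        rw [hkey x b hx, mul_zero]
      rw [step1, ← Finset.sum_coe_sort C (fun k => g.val (f1 a) k * u.val k (f2 b))]
      exact (Fintype.sum_equiv (C.orderIsoOfFin hRC.symm).toEquiv
        (fun b' => g.val (f1 a) (f2 b') * u.val (f2 b') (f2 b))
        (fun x : C => g.val (f1 a) x * u.val x (f2 b)) (fun b' => rfl)).symm
    unfold minorF
    show (Matrix.of fun a b : Fin R.card => (g * u).val (f1 a) (f2 b)).det =
      (Matrix.of fun a b : Fin R.card => g.val (f1 a) (f2 b)).det
    rw [main, Matrix.det_mul]
    have hT : (Matrix.of fun a b : Fin R.card => u.val (f2 a) (f2 b)).det = 1 := by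
      rw [Matrix.det_of_upperTriangular ?_]
      · simp only [Matrix.of_apply]
        rw [Finset.prod_eq_one]
        intro x _
        exact hu2 (f2 x)
      · intro p q hpq
        simp only [Matrix.of_apply]
        apply hu1
        exact (C.orderIsoOfFin hRC.symm).lt_iff_lt.mpr hpq
    rw [hT, mul_one]

end
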